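/- Let $L$ be a module lattice of rank $r$ over a number field $K$ of degree $d$, let $n$ be an integer with $n \ge 2$, and suppose $\lambda^K_{k+1}(L) \ge n\,\lambda^K_k(L)$ for some $k < r$. Let $M \subseteq L$ be the primitive rank-$k$ sub-module containing all vectors of length at most $\lambda^K_k(L)$, and let $L_n \subseteq L$ be a sub-module of rank $r$ such that $L/L_n \cong (\mathbb{Z}_K/n\mathbb{Z}_K)^k$ and $nM$ is primitive in $L_n$. Then $\lambda^K_i(L_n) = n\,\lambda^K_i(L)$ for $i = 1, \ldots, k$, and $\lambda^K_i(L) \le \lambda^K_i(L_n) \le \left(1 + \frac{\Gamma_K\sqrt{kd}}{2}\right)\lambda^K_i(L)$ for $i = k+1, \ldots, r$. -/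

import Mathlib

open scoped NumberField

set_option synthInstance.maxHeartbeats 1000000
set_option maxHeartbeats 1000000

/-- The `j`-th successive minimum of a set `M` (w.r.t. `R`-linear independence). -/
noncomputable def succMin (R : Type*) [Semiring R] {V : Type*} [NormedAddCommGroup V]
    [Module R V] (M : Set V) (j : ℕ) : ℝ :=
  sInf {lam : ℝ | 0 < lam ∧ ∃ v : Fin j → V,
    (∀ i, v i ∈ M) ∧ LinearIndependent R v ∧ ∀ i, ‖v i‖ ≤ lam}

/-- A sub-module `N` of a module lattice `L` is primitive if
`N = L ∩ Span_K(N)`. -/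
def IsPrimitiveIn {K : Type*} [Field K] [NumberField K]
    {V : Type*} [AddCommGroup V] [Module K V] [Module (𝓞 K) V]
    [IsScalarTower (𝓞 K) K V]
    (N L : Submodule (𝓞 K) V) : Prop :=
  N = L ⊓ (Submodule.span K (N : Set V)).restrictScalars (𝓞 K)

namespace Stmt19Aux

open Submodule Module Set

variable {V : Type*} [NormedAddCommGroup V]

def msSet (R : Type*) [Semiring R] [Module R V] (M : Set V) (j : ℕ) : Set ℝ :=
  {lam : ℝ | 0 < lam ∧ ∃ v : Fin j → V,
    (∀ i, v i ∈ M) ∧ LinearIndependent R v ∧ ∀ i, ‖v i‖ ≤ lam}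

variable {R : Type*} [Semiring R] [Module R V] {M N : Set V} {j i : ℕ} {lam c : ℝ}

lemma succMin_eq (R : Type*) [Semiring R] [Module R V] (M : Set V) (j : ℕ) :
    succMin R M j = sInf (msSet R M j) := rfl

lemma msSet_bddBelow : BddBelow (msSet R M j) := ⟨0, fun _ hx => le_of_lt hx.1⟩

lemma succMin_nonneg : 0 ≤ succMin R M j :=
  Real.sInf_nonneg (fun _ hx => hx.1.le)

lemma succMin_le_of_mem (h : lam ∈ msSet R M j) : succMin R M j ≤ lam :=
  csInf_le msSet_bddBelow h

lemma le_succMin (hne : (msSet R M j).Nonempty) (h : ∀ lam ∈ msSet R M j, c ≤ lam) :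
    c ≤ succMin R M j := le_csInf hne h

lemma msSet_mono_index (h : i ≤ j) : msSet R M j ⊆ msSet R M i := by
  rintro lam ⟨h0, v, hv1, hv2, hv3⟩
  exact ⟨h0, v ∘ Fin.castLE h, fun _ => hv1 _,
    hv2.comp _ (Fin.castLE_injective h), fun _ => hv3 _⟩

lemma succMin_mono_index (h : i ≤ j) (hne : (msSet R M j).Nonempty) :
    succMin R M i ≤ succMin R M j :=
  csInf_le_csInf msSet_bddBelow hne (msSet_mono_index h)

lemma msSet_mono_set (h : M ⊆ N) : msSet R M j ⊆ msSet R N j := by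
  rintro lam ⟨h0, v, hv1, hv2, hv3⟩
  exact ⟨h0, v, fun i => h (hv1 i), hv2, hv3⟩

lemma succMin_anti_set (h : M ⊆ N) (hne : (msSet R M j).Nonempty) :
    succMin R N j ≤ succMin R M j :=
  csInf_le_csInf msSet_bddBelow hne (msSet_mono_set h)

/-- ℚ-span is contained in ℝ-span. -/
lemma mem_span_real_of_mem_span_rat {V : Type*} [AddCommGroup V] [Module ℝ V] [Module ℚ V]
    {s : Set V} {x : V} (h : x ∈ span ℚ s) : x ∈ span ℝ s := by
  induction h using Submodule.span_induction with
  | mem y hy => exact subset_span hy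
  | zero => exact zero_mem _
  | add y z _ _ hy hz => exact add_mem hy hz
  | smul q y _ hy =>
    have hq : q • y = (q : ℝ) • y := by
      have := map_ratCast_smul (AddMonoidHom.id V) ℝ ℚ q y
      simpa using this.symm
    rw [hq]; exact smul_mem _ _ hy

/-- Babai nearest plane: integral approximation within the span of a finite family. -/
lemma babai {V : Type*} [NormedAddCommGroup V] [InnerProductSpace ℝ V] [FiniteDimensional ℝ V] :
    ∀ (N : ℕ) (b : Fin N → V) (t : V), t ∈ span ℝ (Set.range b) →
    ∃ z : Fin N → ℤ, ‖t - ∑ i, (z i : ℝ) • b i‖ ^ 2 ≤ (∑ i, ‖b i‖ ^ 2) / 4 := by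
  intro N
  induction N with
  | zero =>
    intro b t ht
    rw [Set.range_eq_empty, span_empty, mem_bot] at ht
    exact ⟨0, by simp [ht]⟩
  | succ N ih =>
    intro b t ht
    obtain ⟨cc, hc⟩ := (mem_span_range_iff_exists_fun ℝ).mp ht
    set W := span ℝ (Set.range (b ∘ Fin.castSucc)) with hW
    set bl := b (Fin.last N) with hbl
    set δ : ℝ := cc (Fin.last N) - (round (cc (Fin.last N)) : ℝ) with hδ
    have hδle : |δ| ≤ 1 / 2 := abs_sub_round _
    set t' := t - (round (cc (Fin.last N)) : ℝ) • bl with ht'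
    set P := orthogonalProjection W with hP
    obtain ⟨z', hz'⟩ := ih (b ∘ Fin.castSucc) (P t') (P t').2
    set zz : Fin (N + 1) → ℤ := Fin.snoc z' (round (cc (Fin.last N))) with hzz
    refine ⟨zz, ?_⟩
    set u : V := ∑ i : Fin N, cc (Fin.castSucc i) • b (Fin.castSucc i) with hu
    have huW : u ∈ W := by
      exact Submodule.sum_mem _ fun i _ =>
        Submodule.smul_mem _ _ (subset_span (Set.mem_range_self i))
    have htu : t' = u + δ • bl := by
      have : t = u + cc (Fin.last N) • bl := by
        rw [hu, ← hc, Fin.sum_univ_castSucc]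
      rw [ht', this, hδ, sub_smul]
      abel
    -- the projection of t'
    have hPu : (P u : V) = u := W.starProjection_eq_self_iff.mpr huW
    have hPt' : (P t' : V) = u + δ • (P bl : V) := by
      rw [htu]
      simp only [map_add, map_smul, Submodule.coe_add, SetLike.val_smul, hPu]
    have hperp : t' - (P t' : V) = δ • (bl - (P bl : V)) := by
      rw [hPt', htu, smul_sub]; abel
    -- sum splitting
    have hsum : ∑ i : Fin (N + 1), ((zz i : ℤ) : ℝ) • b i
        = (∑ i : Fin N, (z' i : ℝ) • b (Fin.castSucc i))
          + (round (cc (Fin.last N)) : ℝ) • bl := by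
      rw [Fin.sum_univ_castSucc]
      simp [hzz, Fin.snoc_castSucc, Fin.snoc_last]
      rfl
    set q : V := ∑ i : Fin N, (z' i : ℝ) • b (Fin.castSucc i) with hq
    have hqW : q ∈ W := Submodule.sum_mem _ fun i _ =>
      Submodule.smul_mem _ _ (subset_span (Set.mem_range_self i))
    have hdecomp : t - ∑ i, ((zz i : ℤ) : ℝ) • b i
        = (t' - (P t' : V)) + ((P t' : V) - q) := by
      rw [hsum, ht']; abel
    -- Pythagoras
    have horth : (inner ℝ (t' - (P t' : V)) ((P t' : V) - q) : ℝ) = 0 := by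
      have h1 : t' - (P t' : V) ∈ Wᗮ := sub_starProjection_mem_orthogonal (K := W) t'
      have h2 : (P t' : V) - q ∈ W := sub_mem (P t').2 hqW
      exact (Submodule.mem_orthogonal' W _).mp h1 _ h2
    have hpyth : ‖t - ∑ i, ((zz i : ℤ) : ℝ) • b i‖ ^ 2
        = ‖t' - (P t' : V)‖ ^ 2 + ‖(P t' : V) - q‖ ^ 2 := by
      rw [hdecomp, norm_add_sq_real, horth]; ring
    -- bound the perpendicular part
    have hblP : ‖bl - (P bl : V)‖ ≤ ‖bl‖ := by
      have h1 : (inner ℝ ((P bl : V)) (bl - (P bl : V)) : ℝ) = 0 := by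
        have := sub_starProjection_mem_orthogonal (K := W) bl
        exact (Submodule.mem_orthogonal W _).mp this _ (P bl).2
      have h2 : ‖bl‖ ^ 2 = ‖(P bl : V)‖ ^ 2 + ‖bl - (P bl : V)‖ ^ 2 := by
        have : bl = (P bl : V) + (bl - (P bl : V)) := by abel
        nth_rewrite 1 [this]
        rw [norm_add_sq_real, h1]; ring
      nlinarith [norm_nonneg (bl - (P bl : V)), norm_nonneg bl, norm_nonneg ((P bl : V)),
        sq_nonneg (‖(P bl : V)‖)]
    have hperpnorm : ‖t' - (P t' : V)‖ ^ 2 ≤ ‖bl‖ ^ 2 / 4 := by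
      rw [hperp, norm_smul]
      have h0 : |δ| * ‖bl - (P bl : V)‖ ≤ (1/2) * ‖bl‖ := by
        apply mul_le_mul hδle hblP (norm_nonneg _) (by norm_num)
      rw [Real.norm_eq_abs]
      have h2 := pow_le_pow_left₀ (mul_nonneg (abs_nonneg δ) (norm_nonneg (bl - (P bl : V)))) h0 2
      calc (|δ| * ‖bl - (P bl : V)‖) ^ 2 ≤ (1/2 * ‖bl‖) ^ 2 := h2
        _ = ‖bl‖ ^ 2 / 4 := by ring
    have hz'' : ‖(P t' : V) - q‖ ^ 2 ≤ (∑ i : Fin N, ‖b (Fin.castSucc i)‖ ^ 2) / 4 := by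
      simpa [hq] using hz'
    rw [hpyth, Fin.sum_univ_castSucc]
    have : ‖b (Fin.last N)‖ = ‖bl‖ := rfl
    rw [this]
    linarith

/-- Cardinality of the quotient of a finite free `ℤ`-module by `n` times itself. -/
lemma card_quot_int_smul {P : Type*} [AddCommGroup P] [Module.Free ℤ P] [Module.Finite ℤ P]
    (n : ℕ) :
    Nat.card (P ⧸ (Submodule.map ((n : ℤ) • (LinearMap.id : P →ₗ[ℤ] P)) (⊤ : Submodule ℤ P)))
      = n ^ (Module.finrank ℤ P) := by
  classical
  set b := Module.Free.chooseBasis ℤ P with hb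
  set ι := Module.Free.ChooseBasisIndex ℤ P
  set e : P ≃ₗ[ℤ] (ι → ℤ) := b.equivFun with he
  have hmap : Submodule.map (e : P →ₗ[ℤ] (ι → ℤ))
      (Submodule.map ((n : ℤ) • (LinearMap.id : P →ₗ[ℤ] P)) ⊤)
      = Submodule.pi Set.univ (fun _ : ι => Ideal.span {(n : ℤ)}) := by
    ext x
    constructor
    · rintro ⟨y, ⟨p, -, rfl⟩, rfl⟩
      intro i _
      have : e ((n : ℤ) • p) = (n : ℤ) • e p := map_smul e _ _
      simp only [LinearMap.smul_apply, LinearMap.id_apply]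
      rw [LinearEquiv.coe_coe, this]
      exact Ideal.mem_span_singleton.mpr ⟨e p i, rfl⟩
    · intro hx
      have hdvd : ∀ i, ∃ c : ℤ, x i = (n : ℤ) * c := by
        intro i
        obtain ⟨c, hc⟩ := Ideal.mem_span_singleton.mp (hx i (Set.mem_univ i))
        exact ⟨c, hc⟩
      choose cf hcf using hdvd
      refine ⟨(n : ℤ) • e.symm cf, ⟨e.symm cf, trivial, rfl⟩, ?_⟩
      have : e ((n : ℤ) • e.symm cf) = (n : ℤ) • cf := by
        rw [map_smul, e.apply_symm_apply]
      rw [LinearEquiv.coe_coe, this]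
      funext i
      exact (hcf i).symm
  have eq1 := Submodule.Quotient.equiv _ _ (e : P ≃ₗ[ℤ] (ι → ℤ)) hmap
  have eq2 := Submodule.quotientPi (fun _ : ι => Ideal.span {(n : ℤ)})
  have eq3 := Int.quotientSpanNatEquivZMod n
  calc Nat.card (P ⧸ (Submodule.map ((n : ℤ) • (LinearMap.id : P →ₗ[ℤ] P)) ⊤))
      = Nat.card ((ι → ℤ) ⧸ Submodule.pi Set.univ (fun _ : ι => Ideal.span {(n : ℤ)})) :=
        Nat.card_congr eq1.toEquiv
    _ = Nat.card (ι → ℤ ⧸ Ideal.span {(n : ℤ)}) := Nat.card_congr eq2.toEquiv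
    _ = ∏ _i : ι, Nat.card (ℤ ⧸ Ideal.span {(n : ℤ)}) := Nat.card_pi
    _ = ∏ _i : ι, n := by
        congr 1; funext i
        rw [Nat.card_congr eq3.toEquiv, Nat.card_zmod]
    _ = n ^ (Fintype.card ι) := by rw [Finset.prod_const, Finset.card_univ]
    _ = n ^ (Module.finrank ℤ P) := by rw [Module.finrank_eq_card_chooseBasisIndex]

lemma card_quot_ringOfIntegers (K : Type*) [Field K] [NumberField K] (n : ℕ) :
    Nat.card ((𝓞 K) ⧸ Ideal.span {(n : 𝓞 K)}) = n ^ Module.finrank ℚ K := by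
  have h : Submodule.restrictScalars ℤ (Ideal.span {(n : 𝓞 K)})
      = Submodule.map ((n : ℤ) • (LinearMap.id : 𝓞 K →ₗ[ℤ] 𝓞 K)) (⊤ : Submodule ℤ (𝓞 K)) := by
    ext x
    simp only [Submodule.restrictScalars_mem, Ideal.mem_span_singleton, Submodule.mem_map,
      Submodule.mem_top, true_and]
    have key : ∀ a : 𝓞 K, ((n : ℤ) • (LinearMap.id : 𝓞 K →ₗ[ℤ] 𝓞 K)) a = (n : 𝓞 K) * a := by
      intro a
      rw [LinearMap.smul_apply, LinearMap.id_apply, zsmul_eq_mul]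
      push_cast
      ring
    constructor
    · rintro ⟨a, rfl⟩
      exact ⟨a, key a⟩
    · rintro ⟨p, rfl⟩
      exact ⟨p, key p⟩
  have e1 := Submodule.Quotient.restrictScalarsEquiv ℤ (Ideal.span {(n : 𝓞 K)})
  calc Nat.card ((𝓞 K) ⧸ Ideal.span {(n : 𝓞 K)})
      = Nat.card ((𝓞 K) ⧸ Submodule.restrictScalars ℤ (Ideal.span {(n : 𝓞 K)})) :=
        (Nat.card_congr e1.toEquiv).symm
    _ = Nat.card ((𝓞 K) ⧸ Submodule.map ((n : ℤ) • (LinearMap.id : 𝓞 K →ₗ[ℤ] 𝓞 K)) ⊤) := by rw [h]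
    _ = n ^ Module.finrank ℤ (𝓞 K) := card_quot_int_smul n
    _ = n ^ Module.finrank ℚ K := by rw [NumberField.RingOfIntegers.rank]

end Stmt19Aux


set_option maxHeartbeats 4000000 in
open Submodule Module Set Stmt19Aux in
/-- closing one gap. Let `L` be a rank-`r` module lattice over a
number field `K` of degree `d`, `n ≥ 2`, and suppose `λ^K_{k+1}(L) ≥ n λ^K_k(L)`
for some `k < r`. Let `M` be the primitive rank-`k` sub-module containing all
vectors of length at most `λ^K_k(L)`, and `L_n ⊆ L` with
`L/L_n ≅ (𝓞_K/n𝓞_K)^k` and `nM` primitive in `L_n`. Then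
`λ^K_i(L_n) = n λ^K_i(L)` for `i ≤ k`, and
`λ^K_i(L) ≤ λ^K_i(L_n) ≤ (1 + Γ_K √(kd)/2) λ^K_i(L)` for `k+1 ≤ i ≤ r`. -/
theorem stmt19
    {K : Type*} [Field K] [NumberField K]
    {V : Type*} [NormedAddCommGroup V] [InnerProductSpace ℝ V] [FiniteDimensional ℝ V]
    [Module ℚ V] [Module K V] [Module (𝓞 K) V]
    [IsScalarTower ℚ K V] [IsScalarTower (𝓞 K) K V]
    (r : ℕ) (hr : 0 < r)
    (L : Submodule (𝓞 K) V) [DiscreteTopology L]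
    [Module.Free (𝓞 K) L] (hrank : Module.finrank (𝓞 K) L = r)
    (Γ : ℝ) (hΓ1 : 1 ≤ Γ)
    (hΓ : ∀ x ∈ L, x ≠ 0 →
      succMin ℚ ((Submodule.span (𝓞 K) {x} : Submodule (𝓞 K) V) : Set V)
          (Module.finrank ℚ K) ≤
        Γ * succMin ℚ ((Submodule.span (𝓞 K) {x} : Submodule (𝓞 K) V) : Set V) 1)
    (n : ℕ) (hn : 2 ≤ n)
    (k : ℕ) (hk1 : 1 ≤ k) (hkr : k < r)
    (hgap : (n : ℝ) * succMin K (L : Set V) k ≤ succMin K (L : Set V) (k + 1))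
    (M : Submodule (𝓞 K) V)
    (hMrank : Module.finrank (𝓞 K) M = k)
    (hM : M = L ⊓ (Submodule.span K
        {x : V | x ∈ L ∧ ‖x‖ ≤ succMin K (L : Set V) k}).restrictScalars (𝓞 K))
    (Ln : Submodule (𝓞 K) V) (hLnL : Ln ≤ L)
    (hquot : Nonempty ((↥L ⧸ Ln.comap L.subtype) ≃ₗ[𝓞 K]
        (Fin k → (𝓞 K ⧸ Ideal.span {(n : 𝓞 K)}))))
    (hprim : IsPrimitiveIn
        (M.map ((n : 𝓞 K) • (LinearMap.id : V →ₗ[𝓞 K] V))) Ln) :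
    (∀ i : ℕ, 1 ≤ i → i ≤ k →
        succMin K (Ln : Set V) i = (n : ℝ) * succMin K (L : Set V) i) ∧
      ∀ i : ℕ, k + 1 ≤ i → i ≤ r →
        succMin K (L : Set V) i ≤ succMin K (Ln : Set V) i ∧
          succMin K (Ln : Set V) i ≤
            (1 + Γ * Real.sqrt ((k * Module.finrank ℚ K : ℕ) : ℝ) / 2) *
              succMin K (L : Set V) i := by
  classical
  set d := Module.finrank ℚ K with hdd
  have hd1 : 1 ≤ d := Module.finrank_pos
  have hn0 : (0 : ℝ) < n := by positivity
  have hnK : (n : K) ≠ 0 := Nat.cast_ne_zero.mpr (by omega)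
  -- basic smul facts
  have hsmulR : ∀ x : V, (n : 𝓞 K) • x = (n : ℝ) • x := by
    intro x
    rw [Nat.cast_smul_eq_nsmul (𝓞 K) n x, Nat.cast_smul_eq_nsmul ℝ n x]
  have hsmulK : ∀ x : V, (n : 𝓞 K) • x = (n : K) • x := by
    intro x
    rw [Nat.cast_smul_eq_nsmul (𝓞 K) n x, Nat.cast_smul_eq_nsmul K n x]
  have hnorm_smul : ∀ x : V, ‖(n : 𝓞 K) • x‖ = n * ‖x‖ := by
    intro x
    rw [hsmulR, norm_smul, Real.norm_natCast]
  -- the short-vector set and its span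
  set S : Set V := {x : V | x ∈ L ∧ ‖x‖ ≤ succMin K (L : Set V) k} with hSdef
  set WK : Submodule K V := Submodule.span K S with hWKdef
  have hML : M ≤ L := by rw [hM]; exact inf_le_left
  have hMW : ∀ x ∈ M, x ∈ WK := by
    intro x hx
    rw [hM] at hx
    exact hx.2
  have hSM : S ⊆ (M : Set V) := by
    intro x hx
    rw [hM]
    exact ⟨hx.1, subset_span hx⟩
  have hspanM : Submodule.span K (M : Set V) = WK := by
    apply le_antisymm
    · exact span_le.mpr fun x hx => hMW x hx
    · calc WK = Submodule.span K S := rfl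
        _ ≤ Submodule.span K (M : Set V) := span_mono hSM
  -- nM
  set nMV : Submodule (𝓞 K) V := M.map ((n : 𝓞 K) • (LinearMap.id : V →ₗ[𝓞 K] V)) with hnMVdef
  have hmem_nMV : ∀ x : V, x ∈ nMV ↔ ∃ m ∈ M, (n : 𝓞 K) • m = x := by
    intro x
    constructor
    · rintro ⟨m, hm, rfl⟩
      exact ⟨m, hm, rfl⟩
    · rintro ⟨m, hm, rfl⟩
      exact ⟨m, hm, rfl⟩
  have hnMV_le_M : nMV ≤ M := by
    intro x hx
    obtain ⟨m, hm, rfl⟩ := (hmem_nMV x).mp hx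
    exact M.smul_mem _ hm
  have hnMV_le_Ln : nMV ≤ Ln := le_of_eq_of_le hprim inf_le_left
  have hspan_nMV : Submodule.span K (nMV : Set V) = WK := by
    apply le_antisymm
    · rw [← hspanM]
      exact span_mono hnMV_le_M
    · rw [← hspanM]
      apply span_le.mpr
      intro m hm
      have h1 : (n : 𝓞 K) • m ∈ Submodule.span K (nMV : Set V) :=
        subset_span ((hmem_nMV _).mpr ⟨m, hm, rfl⟩)
      have h2 : m = (n : K)⁻¹ • ((n : K) • m) := by
        rw [smul_smul, inv_mul_cancel₀ hnK, one_smul]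
      rw [h2]
      exact Submodule.smul_mem _ _ (by rwa [hsmulK] at h1)
  have hMeetLn : ∀ x, x ∈ Ln → x ∈ WK → x ∈ nMV := by
    intro x h1 h2
    rw [hprim, Submodule.mem_inf]
    refine ⟨h1, ?_⟩
    rw [Submodule.restrictScalars_mem, hspan_nMV]
    exact h2
  -- n L ⊆ Ln
  have hnL : ∀ x ∈ L, (n : 𝓞 K) • x ∈ Ln := by
    intro x hx
    obtain ⟨e⟩ := hquot
    have hz : ∀ q : ↥L ⧸ Ln.comap L.subtype, (n : 𝓞 K) • q = 0 := by
      intro q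
      apply e.injective
      rw [map_smul, map_zero]
      funext a
      obtain ⟨z, hzz⟩ := Submodule.Quotient.mk_surjective _ (e q a)
      rw [Pi.smul_apply, Pi.zero_apply, ← hzz, ← Submodule.Quotient.mk_smul]
      rw [Submodule.Quotient.mk_eq_zero]
      exact Ideal.mem_span_singleton.mpr (Dvd.intro z rfl)
    have := hz (Submodule.Quotient.mk ⟨x, hx⟩)
    rw [← Submodule.Quotient.mk_smul, Submodule.Quotient.mk_eq_zero] at this
    exact this
  -- positivity of the k-th minimum
  have hlamk_nonneg : 0 ≤ succMin K (L : Set V) k := succMin_nonneg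
  have hlamk_pos : 0 < succMin K (L : Set V) k := by
    rcases hlamk_nonneg.eq_or_lt with h | h
    · exfalso
      have hS0 : S ⊆ {(0 : V)} := by
        intro x hx
        have hx2 : ‖x‖ ≤ succMin K (L : Set V) k := hx.2
        rw [← h] at hx2
        exact Set.mem_singleton_iff.mpr (norm_le_zero_iff.mp hx2)
      have hWbot : WK ≤ ⊥ := by
        rw [hWKdef]
        refine span_le.mpr (hS0.trans ?_)
        simp
      have hMbot : M = ⊥ := by
        apply le_bot_iff.mp
        intro x hx
        exact hWbot (hMW x hx)
      rw [hMbot] at hMrank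
      rw [finrank_bot] at hMrank
      omega
    · exact h
  have hnn2 : (2 : ℝ) ≤ (n : ℝ) := by exact_mod_cast hn
  -- at most k independent short vectors
  have key7 : ∀ v : Fin (k + 1) → V, (∀ j, v j ∈ L) → (∀ j, ‖v j‖ ≤ succMin K (L : Set V) k) →
      ¬ LinearIndependent K v := by
    intro v hvL hvnorm hvind
    have hmem : succMin K (L : Set V) k ∈ msSet K (L : Set V) (k + 1) :=
      ⟨hlamk_pos, v, hvL, hvind, hvnorm⟩
    have h1 : succMin K (L : Set V) (k + 1) ≤ succMin K (L : Set V) k :=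
      succMin_le_of_mem hmem
    nlinarith
  have key7' : ∀ t : Finset V, ↑t ⊆ S → LinearIndependent K (Subtype.val : (↑t : Set V) → V) →
      t.card ≤ k := by
    intro t htS htind
    by_contra hcard
    push_neg at hcard
    obtain ⟨t', ht't, ht'card⟩ := Finset.exists_subset_card_eq (s := t) (n := k + 1) hcard
    have ht'ind : LinearIndependent K (Subtype.val : (↑t' : Set V) → V) :=
      LinearIndepOn.mono (v := id) htind (by exact_mod_cast ht't)
    have hcardeq : Fintype.card (↑t' : Set V) = k + 1 := by
      simpa using ht'card
    set et := (Fintype.equivFinOfCardEq hcardeq).symm with het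
    refine key7 (fun j => ((et j : (↑t' : Set V)) : V)) ?_ ?_
      (ht'ind.comp et et.injective)
    · intro j
      exact (htS (ht't (et j).2)).1
    · intro j
      exact (htS (ht't (et j).2)).2
  -- extract a K-basis of WK from S
  obtain ⟨bset, hbS, hbspan, hbindep⟩ := exists_linearIndependent K S
  have hbfin : bset.Finite := by
    by_contra hinf
    have hbi : bset.Infinite := hinf
    obtain ⟨t, htb, htcard⟩ := hbi.exists_subset_card_eq (k + 1)
    have := key7' t (htb.trans hbS) (LinearIndepOn.mono (v := id) hbindep htb)
    omega
  have : Fintype bset := hbfin.fintype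
  have hbcard_le : bset.toFinset.card ≤ k := by
    apply key7' bset.toFinset (by rw [Set.coe_toFinset]; exact hbS)
    rw [Set.coe_toFinset]
    exact hbindep
  have hWKb : WK = Submodule.span K bset := by rw [hWKdef, hbspan]
  have hWKfd : FiniteDimensional K ↥WK := by
    rw [hWKb]
    exact FiniteDimensional.span_of_finite K hbfin
  have hWKrank_eq_card : Module.finrank K ↥WK = bset.toFinset.card := by
    rw [hWKb]
    exact finrank_span_set_eq_card hbindep
  -- k ≤ finrank K WK via the rank of M
  have hk_le_WK : k ≤ Module.finrank K ↥WK := by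
    rw [← hMrank]
    have hrankle : Module.rank (𝓞 K) ↥M ≤ (Module.finrank K ↥WK : Cardinal) := by
      apply _root_.rank_le
      intro s hs
      have h1 : LinearIndependent (𝓞 K) (fun i : s => ((i : ↥M) : V)) :=
        hs.map' M.subtype (Submodule.ker_subtype M)
      have h2 : LinearIndependent K (fun i : s => ((i : ↥M) : V)) :=
        (LinearIndependent.iff_fractionRing (𝓞 K) K).mp h1
      have h3 : LinearIndependent K (fun i : s => (⟨((i : ↥M) : V), hMW _ (i : ↥M).2⟩ : ↥WK)) := by
        apply LinearIndependent.of_comp WK.subtype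
        exact h2
      simpa using h3.fintype_card_le_finrank
    exact Module.finrank_le_of_rank_le hrankle
  have hbcard : bset.toFinset.card = k := le_antisymm hbcard_le (hWKrank_eq_card ▸ hk_le_WK)
  have hWKrank : Module.finrank K ↥WK = k := by rw [hWKrank_eq_card, hbcard]
  -- the family y
  have hbcard' : Fintype.card bset = k := by rw [← Set.toFinset_card, hbcard]
  set ey := (Fintype.equivFinOfCardEq hbcard').symm with hey
  set y : Fin k → V := fun j => ((ey j : bset) : V) with hy
  have hyS : ∀ j, y j ∈ S := fun j => hbS (ey j).2
  have hyM : ∀ j, y j ∈ M := fun j => hSM (hyS j)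
  have hyindep : LinearIndependent K y := hbindep.comp ey ey.injective
  have hyrange : Set.range y = bset := by
    rw [hy]
    have : Set.range (fun j : Fin k => ((ey j : bset) : V)) = Subtype.val '' Set.range ey := by
      rw [← Set.range_comp]; rfl
    rw [this, Equiv.range_eq_univ, Set.image_univ, Subtype.range_coe]
  have hyspan : Submodule.span K (Set.range y) = WK := by rw [hyrange, ← hWKb]
  have hynorm : ∀ j, ‖y j‖ ≤ succMin K (L : Set V) k := fun j => (hyS j).2
  -- all vectors of L shorter than the (k+1)-st minimum lie in WK
  have key2 : ∀ v ∈ L, ‖v‖ < succMin K (L : Set V) (k + 1) → v ∈ WK := by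
    intro v hvL hvnorm
    by_contra hvW
    have hv0 : v ≠ 0 := fun h => hvW (h ▸ WK.zero_mem)
    have hsingle : LinearIndependent K (fun _ : Fin 1 => v) :=
      LinearIndependent.of_subsingleton (v := fun _ : Fin 1 => v) 0 hv0
    have hdisj : Disjoint (Submodule.span K (Set.range y))
        (Submodule.span K (Set.range (fun _ : Fin 1 => v))) := by
      rw [disjoint_iff]
      apply le_bot_iff.mp
      intro x hx
      rw [Submodule.mem_inf] at hx
      obtain ⟨hx1, hx2⟩ := hx
      have : Set.range (fun _ : Fin 1 => v) = {v} := by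
        simp [Set.range_const]
      rw [this] at hx2
      obtain ⟨c, rfl⟩ := Submodule.mem_span_singleton.mp hx2
      rcases eq_or_ne c 0 with h | h
      · simp [h]
      · exfalso
        apply hvW
        rw [hyspan] at hx1
        have : v = c⁻¹ • (c • v) := by rw [smul_smul, inv_mul_cancel₀ h, one_smul]
        rw [this]
        exact WK.smul_mem _ hx1
    have hsum : LinearIndependent K (Sum.elim y (fun _ : Fin 1 => v)) :=
      hyindep.sum_type hsingle hdisj
    set F : Fin (k + 1) → V := Sum.elim y (fun _ : Fin 1 => v) ∘ (finSumFinEquiv (m := k) (n := 1)).symm with hF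
    have hFind : LinearIndependent K F := hsum.comp _ (finSumFinEquiv.symm.injective)
    have hFL : ∀ j, F j ∈ L := by
      intro j
      rcases hj : (finSumFinEquiv (m := k) (n := 1)).symm j with a | a
      · have hFj : F j = y a := by rw [hF]; simp [Function.comp, hj]
        rw [hFj]; exact hML (hyM a)
      · have hFj : F j = v := by rw [hF]; simp [Function.comp, hj]
        rw [hFj]; exact hvL
    set mx := max (succMin K (L : Set V) k) ‖v‖ with hmx
    have hFnorm : ∀ j, ‖F j‖ ≤ mx := by
      intro j
      rcases hj : (finSumFinEquiv (m := k) (n := 1)).symm j with a | a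
      · have hFj : F j = y a := by rw [hF]; simp [Function.comp, hj]
        rw [hFj]; exact le_max_of_le_left (hynorm a)
      · have hFj : F j = v := by rw [hF]; simp [Function.comp, hj]
        rw [hFj]; exact le_max_right _ _
    have hmxmem : mx ∈ msSet K (L : Set V) (k + 1) :=
      ⟨lt_max_of_lt_left hlamk_pos, F, hFL, hFind, hFnorm⟩
    have h1 : succMin K (L : Set V) (k + 1) ≤ mx := succMin_le_of_mem hmxmem
    have h2 : mx < succMin K (L : Set V) (k + 1) := by
      apply max_lt _ hvnorm
      nlinarith
    linarith
  -- finiteness of L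
  have hfinIdx : Finite (Module.Free.ChooseBasisIndex (𝓞 K) ↥L) := by
    by_contra hinf
    haveI : Infinite (Module.Free.ChooseBasisIndex (𝓞 K) ↥L) := not_finite_iff_infinite.mp hinf
    have h1 : Cardinal.mk (Module.Free.ChooseBasisIndex (𝓞 K) ↥L) = Module.rank (𝓞 K) ↥L :=
      Basis.mk_eq_rank'' (Module.Free.chooseBasis (𝓞 K) ↥L)
    have h2 : (Cardinal.aleph0 : Cardinal) ≤ Module.rank (𝓞 K) ↥L := by
      rw [← h1]; exact Cardinal.infinite_iff.mp this
    have h3 : Module.finrank (𝓞 K) ↥L = 0 := by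
      rw [Module.finrank, Cardinal.toNat_apply_of_aleph0_le h2]
    omega
  haveI := hfinIdx
  haveI hLfin : Module.Finite (𝓞 K) ↥L :=
    Module.Finite.of_basis (Module.Free.chooseBasis (𝓞 K) ↥L)
  haveI hLNoeth : IsNoetherian (𝓞 K) ↥L := isNoetherian_of_isNoetherianRing_of_finite _ _
  have hcardIdx : Fintype.card (Module.Free.ChooseBasisIndex (𝓞 K) ↥L) = r := by
    rw [← Module.finrank_eq_card_chooseBasisIndex, hrank]
  set eL := (Fintype.equivFinOfCardEq hcardIdx).symm with heL
  set xL : Fin r → V := fun j => ((Module.Free.chooseBasis (𝓞 K) ↥L) (eL j) : V) with hxL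
  have hxLmem : ∀ j, xL j ∈ L := fun j => ((Module.Free.chooseBasis (𝓞 K) ↥L) (eL j)).2
  have hxLind : LinearIndependent K xL := by
    have h1 : LinearIndependent (𝓞 K)
        (fun i => (((Module.Free.chooseBasis (𝓞 K) ↥L) i : ↥L) : V)) :=
      (Module.Free.chooseBasis (𝓞 K) ↥L).linearIndependent.map' L.subtype (Submodule.ker_subtype L)
    exact (LinearIndependent.iff_fractionRing (𝓞 K) K).mp (h1.comp eL eL.injective)
  obtain ⟨B0, hB0⟩ := Finset.exists_le (Finset.univ.image fun j : Fin r => ‖xL j‖)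
  have hxLbound : ∀ j, ‖xL j‖ ≤ max B0 1 := fun j =>
    le_trans (hB0 _ (Finset.mem_image_of_mem _ (Finset.mem_univ j))) (le_max_left _ _)
  -- scaling preserves K-independence
  have hsmul_indep : ∀ {m : ℕ} (v : Fin m → V), LinearIndependent K v →
      LinearIndependent K (fun j => (n : 𝓞 K) • v j) := by
    intro m v hv
    have h2 : LinearIndependent K (⇑((n : K) • (LinearMap.id : V →ₗ[K] V)) ∘ v) :=
      hv.map' _ (by rw [LinearMap.ker_smul _ _ hnK, LinearMap.ker_id])
    have h3 : (fun j => (n : 𝓞 K) • v j) = ⇑((n : K) • (LinearMap.id : V →ₗ[K] V)) ∘ v := by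
      funext j
      simp only [Function.comp_apply, LinearMap.smul_apply, LinearMap.id_apply]
      exact hsmulK (v j)
    rw [h3]
    exact h2
  -- nonemptiness of minima sets
  have hneL : ∀ i, i ≤ r → (msSet K (L : Set V) i).Nonempty := by
    intro i hi
    exact ⟨max B0 1, lt_of_lt_of_le zero_lt_one (le_max_right _ _), xL ∘ Fin.castLE hi,
      fun j => hxLmem _, hxLind.comp _ (Fin.castLE_injective hi), fun j => hxLbound _⟩
  have hneLn : ∀ i, i ≤ r → (msSet K (Ln : Set V) i).Nonempty := by
    intro i hi
    refine ⟨(n : ℝ) * max B0 1, by positivity,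
      (fun j => (n : 𝓞 K) • xL j) ∘ Fin.castLE hi, fun j => hnL _ (hxLmem _),
      (hsmul_indep xL hxLind).comp _ (Fin.castLE_injective hi), fun j => ?_⟩
    simp only [Function.comp_apply]
    rw [hnorm_smul]
    exact mul_le_mul_of_nonneg_left (hxLbound _) (le_of_lt hn0)
  -- PART 1
  have part1 : ∀ i : ℕ, 1 ≤ i → i ≤ k →
      succMin K (Ln : Set V) i = (n : ℝ) * succMin K (L : Set V) i := by
    intro i hi1 hik
    have hir : i ≤ r := le_trans hik (le_of_lt hkr)
    have hneLi := hneL i hir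
    have hneLni := hneLn i hir
    have hmono_ik : succMin K (L : Set V) i ≤ succMin K (L : Set V) k :=
      succMin_mono_index hik (hneL k (le_of_lt hkr))
    have hlami_nonneg : (0 : ℝ) ≤ succMin K (L : Set V) i := succMin_nonneg
    have hge : (n : ℝ) * succMin K (L : Set V) i ≤ succMin K (Ln : Set V) i := by
      apply le_succMin hneLni
      rintro lam ⟨hlam0, v, hvLn, hvind, hvnorm⟩
      by_contra hcon
      push_neg at hcon
      have hlamlt : lam < succMin K (L : Set V) (k + 1) := by
        have : lam < (n : ℝ) * succMin K (L : Set V) k := by nlinarith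
        linarith [hgap]
      have hvW : ∀ j, v j ∈ nMV := by
        intro j
        apply hMeetLn _ (hvLn j)
        exact key2 _ (hLnL (hvLn j)) (lt_of_le_of_lt (hvnorm j) hlamlt)
      choose w hwM hweq using fun j => (hmem_nMV (v j)).mp (hvW j)
      have hwind : LinearIndependent K w := by
        have h2 : LinearIndependent K (⇑(((n : K)⁻¹) • (LinearMap.id : V →ₗ[K] V)) ∘ v) :=
          hvind.map' _ (by rw [LinearMap.ker_smul _ _ (inv_ne_zero hnK), LinearMap.ker_id])
        have h3 : w = ⇑(((n : K)⁻¹) • (LinearMap.id : V →ₗ[K] V)) ∘ v := by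
          funext j
          simp only [Function.comp_apply, LinearMap.smul_apply, LinearMap.id_apply]
          rw [← hweq j, hsmulK, smul_smul, inv_mul_cancel₀ hnK, one_smul]
        rw [h3]
        exact h2
      have hwnorm : ∀ j, ‖w j‖ ≤ lam / n := by
        intro j
        rw [le_div_iff₀ hn0]
        have : ‖(n : 𝓞 K) • w j‖ = n * ‖w j‖ := hnorm_smul (w j)
        rw [hweq j] at this
        calc ‖w j‖ * n = n * ‖w j‖ := mul_comm _ _
          _ = ‖v j‖ := this.symm
          _ ≤ lam := hvnorm j
      have hmem2 : lam / n ∈ msSet K (L : Set V) i :=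
        ⟨by positivity, w, fun j => hML (hwM j), hwind, hwnorm⟩
      have h4 := succMin_le_of_mem hmem2
      rw [le_div_iff₀ hn0] at h4
      nlinarith
    have hle : succMin K (Ln : Set V) i ≤ (n : ℝ) * succMin K (L : Set V) i := by
      have hstep : ∀ lam ∈ msSet K (L : Set V) i, succMin K (Ln : Set V) i ≤ (n : ℝ) * lam := by
        rintro lam ⟨hlam0, v, hvL, hvind, hvnorm⟩
        apply succMin_le_of_mem
        refine ⟨by positivity, fun j => (n : 𝓞 K) • v j, fun j => hnL _ (hvL j),
          hsmul_indep v hvind, fun j => ?_⟩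
        rw [hnorm_smul]
        exact mul_le_mul_of_nonneg_left (hvnorm j) (le_of_lt hn0)
      have h2 : ∀ lam ∈ msSet K (L : Set V) i, succMin K (Ln : Set V) i / n ≤ lam := by
        intro lam hlam
        rw [div_le_iff₀ hn0]
        calc succMin K (Ln : Set V) i ≤ (n : ℝ) * lam := hstep lam hlam
          _ = lam * n := mul_comm _ _
      have h3 := le_succMin hneLi h2
      rw [div_le_iff₀ hn0] at h3
      calc succMin K (Ln : Set V) i ≤ succMin K (L : Set V) i * n := h3
        _ = (n : ℝ) * succMin K (L : Set V) i := mul_comm _ _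
    linarith
  -- M is module-finite and ℤ-free
  haveI hMfin : Module.Finite (𝓞 K) ↥M := by
    haveI h1 : Module.Finite (𝓞 K) ↥(M.comap L.subtype) := by
      rw [Module.Finite.iff_fg]
      exact IsNoetherian.noetherian _
    exact Module.Finite.equiv (Submodule.comapSubtypeEquivOfLe hML)
  haveI hMfinZ : Module.Finite ℤ ↥M := Module.Finite.trans (𝓞 K) ↥M
  haveI hnzsd : NoZeroSMulDivisors ℤ ↥M := by
    constructor
    intro c x hcx
    rcases eq_or_ne c 0 with h | h
    · exact Or.inl h
    · right
      have h1 : (c : ℚ) • (x : V) = 0 := by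
        rw [Int.cast_smul_eq_zsmul ℚ c ((x : V))]
        have h2 : ((c • x : ↥M) : V) = c • (x : V) := rfl
        rw [← h2, hcx]
        rfl
      have h2 : (c : ℚ) ≠ 0 := Int.cast_ne_zero.mpr h
      have h3 : (x : V) = 0 := by
        have := congrArg (fun z => ((c : ℚ))⁻¹ • z) h1
        simpa [smul_smul, inv_mul_cancel₀ h2] using this
      exact Subtype.ext h3
  haveI hMfree : Module.Free ℤ ↥M := Module.free_of_finite_type_torsion_free'
  -- basis of WK over ℚ
  have hyWK : ∀ j, y j ∈ WK := fun j => hMW _ (hyM j)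
  set yW : Fin k → ↥WK := fun j => ⟨y j, hyWK j⟩ with hyWdef
  have hyWind : LinearIndependent K yW := by
    apply LinearIndependent.of_comp WK.subtype
    exact hyindep
  have hyWspan : ⊤ ≤ Submodule.span K (Set.range yW) := by
    intro x _
    have hmapy : Submodule.map WK.subtype (Submodule.span K (Set.range yW))
        = Submodule.span K (Set.range y) := by
      rw [Submodule.map_span]
      congr 1
      rw [← Set.range_comp]
      rfl
    have hx : (x : V) ∈ Submodule.map WK.subtype (Submodule.span K (Set.range yW)) := by
      rw [hmapy, hyspan]
      exact x.2
    obtain ⟨z, hz, hzeq⟩ := hx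
    have hzx : z = x := Subtype.ext hzeq
    rwa [← hzx]
  set yB : Basis (Fin k) K ↥WK := Basis.mk hyWind hyWspan with hyB
  set BQ : Basis ((Module.Free.ChooseBasisIndex ℤ (𝓞 K)) × Fin k) ℚ ↥WK :=
    (NumberField.integralBasis K).smulTower yB with hBQ
  haveI : Module.Finite ℚ ↥WK := Module.Finite.of_basis BQ
  have hcard_ιK : Fintype.card (Module.Free.ChooseBasisIndex ℤ (𝓞 K)) = d := by
    rw [← Module.finrank_eq_card_chooseBasisIndex ℤ (𝓞 K), NumberField.RingOfIntegers.rank, hdd]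
  have hWKQrank : Module.finrank ℚ ↥WK = d * k := by
    rw [Module.finrank_eq_card_basis BQ, Fintype.card_prod, hcard_ιK, Fintype.card_fin]
  -- finrank ℤ M = k d
  have hMZ_le : Module.finrank ℤ ↥M ≤ d * k := by
    set bM := Module.Free.chooseBasis ℤ ↥M with hbM
    have h1 : LinearIndependent ℤ (fun i => ((bM i : ↥M) : V)) :=
      bM.linearIndependent.map' (M.subtype.restrictScalars ℤ)
        (by rw [LinearMap.ker_restrictScalars, Submodule.ker_subtype, Submodule.restrictScalars_bot])
    have h2 : LinearIndependent ℚ (fun i => ((bM i : ↥M) : V)) :=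
      (LinearIndependent.iff_fractionRing ℤ ℚ).mp h1
    have h3 : LinearIndependent ℚ
        (fun i => (⟨((bM i : ↥M) : V), hMW _ (bM i : ↥M).2⟩ : ↥WK)) := by
      apply LinearIndependent.of_comp (WK.subtype.restrictScalars ℚ)
      exact h2
    have h4 := h3.fintype_card_le_finrank
    rw [hWKQrank] at h4
    rw [Module.finrank_eq_card_chooseBasisIndex ℤ ↥M]
    exact h4
  have hMZ_ge : d * k ≤ Module.finrank ℤ ↥M := by
    set bO := NumberField.RingOfIntegers.basis K with hbO
    have h0 : LinearIndependent ℚ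
        (fun p : (Module.Free.ChooseBasisIndex ℤ (𝓞 K)) × Fin k =>
          (NumberField.integralBasis K p.1 : K) • y p.2) :=
      linearIndependent_smul (NumberField.integralBasis K).linearIndependent hyindep
    have h1 : LinearIndependent ℚ
        (fun p : (Module.Free.ChooseBasisIndex ℤ (𝓞 K)) × Fin k =>
          ((bO p.1 : 𝓞 K)) • y p.2) := by
      have heqf : (fun p : (Module.Free.ChooseBasisIndex ℤ (𝓞 K)) × Fin k =>
          ((bO p.1 : 𝓞 K)) • y p.2)
          = (fun p : (Module.Free.ChooseBasisIndex ℤ (𝓞 K)) × Fin k =>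
          (NumberField.integralBasis K p.1 : K) • y p.2) := by
        funext p
        rw [NumberField.integralBasis_apply, algebraMap_smul]
      rw [heqf]
      exact h0
    have h2 : LinearIndependent ℤ
        (fun p : (Module.Free.ChooseBasisIndex ℤ (𝓞 K)) × Fin k =>
          ((bO p.1 : 𝓞 K)) • y p.2) :=
      (LinearIndependent.iff_fractionRing ℤ ℚ).mpr h1
    have h3 : LinearIndependent ℤ
        (fun p : (Module.Free.ChooseBasisIndex ℤ (𝓞 K)) × Fin k =>
          (⟨(bO p.1 : 𝓞 K) • y p.2, M.smul_mem _ (hyM p.2)⟩ : ↥M)) := by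
      apply LinearIndependent.of_comp (M.subtype.restrictScalars ℤ)
      exact h2
    have h4 := h3.fintype_card_le_finrank
    rw [Fintype.card_prod, hcard_ιK, Fintype.card_fin] at h4
    exact h4
  have hMZrank : Module.finrank ℤ ↥M = d * k := le_antisymm hMZ_le hMZ_ge
  -- the quotient cardinalities
  set Ln' := Ln.comap L.subtype with hLn'def
  set T : Submodule (𝓞 K) ↥M := nMV.comap M.subtype with hTdef
  have hzsmulcoe : ∀ (m' : ↥M),
      ((((n : ℤ) • (LinearMap.id : ↥M →ₗ[ℤ] ↥M)) m' : ↥M) : V) = (n : 𝓞 K) • (m' : V) := by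
    intro m'
    simp only [LinearMap.smul_apply, LinearMap.id_apply]
    have h1 : (((n : ℤ) • m' : ↥M) : V) = (n : ℤ) • (m' : V) := rfl
    rw [h1, natCast_zsmul, ← Nat.cast_smul_eq_nsmul (𝓞 K) n ((m' : V))]
  have hTrestrict : T.restrictScalars ℤ
      = Submodule.map ((n : ℤ) • (LinearMap.id : ↥M →ₗ[ℤ] ↥M)) ⊤ := by
    ext m
    rw [Submodule.restrictScalars_mem, hTdef, Submodule.mem_comap]
    constructor
    · intro hm
      obtain ⟨x, hx, hxe⟩ := (hmem_nMV _).mp hm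
      refine ⟨⟨x, hx⟩, Submodule.mem_top, ?_⟩
      apply Subtype.ext
      rw [hzsmulcoe ⟨x, hx⟩]
      exact hxe
    · rintro ⟨m', -, rfl⟩
      apply (hmem_nMV _).mpr
      exact ⟨(m' : V), m'.2, (hzsmulcoe m').symm⟩
  have hcardMq : Nat.card (↥M ⧸ T) = n ^ (k * d) := by
    have e1 := Submodule.Quotient.restrictScalarsEquiv ℤ T
    calc Nat.card (↥M ⧸ T)
        = Nat.card (↥M ⧸ T.restrictScalars ℤ) := (Nat.card_congr e1.toEquiv).symm
      _ = Nat.card (↥M ⧸ Submodule.map ((n : ℤ) • (LinearMap.id : ↥M →ₗ[ℤ] ↥M)) ⊤) := by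
          rw [hTrestrict]
      _ = n ^ Module.finrank ℤ ↥M := card_quot_int_smul n
      _ = n ^ (k * d) := by rw [hMZrank, Nat.mul_comm]
  have hcardLq : Nat.card (↥L ⧸ Ln') = n ^ (k * d) := by
    obtain ⟨e⟩ := hquot
    calc Nat.card (↥L ⧸ Ln')
        = Nat.card (Fin k → 𝓞 K ⧸ Ideal.span {(n : 𝓞 K)}) := Nat.card_congr e.toEquiv
      _ = (Nat.card (𝓞 K ⧸ Ideal.span {(n : 𝓞 K)})) ^ k := by
          rw [Nat.card_pi, Finset.prod_const, Finset.card_univ, Fintype.card_fin]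
      _ = (n ^ d) ^ k := by rw [card_quot_ringOfIntegers K n, hdd]
      _ = n ^ (k * d) := by rw [← pow_mul, Nat.mul_comm]
  haveI hfinQL : Finite (↥L ⧸ Ln') := by
    apply Nat.finite_of_card_ne_zero
    rw [hcardLq]
    exact pow_ne_zero _ (by omega)
  set φ : ↥M →ₗ[𝓞 K] (↥L ⧸ Ln') := (Ln'.mkQ).comp (Submodule.inclusion hML) with hφdef
  have hkerφ : LinearMap.ker φ = T := by
    ext m
    rw [LinearMap.mem_ker, hφdef, LinearMap.comp_apply, Submodule.mkQ_apply,
      Submodule.Quotient.mk_eq_zero, hTdef, Submodule.mem_comap]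
    show ((m : V) ∈ Ln) ↔ ((m : V) ∈ nMV)
    constructor
    · intro h
      exact hMeetLn _ h (hMW _ m.2)
    · intro h
      exact hnMV_le_Ln h
  have hsurj : Function.Surjective φ := by
    rw [← LinearMap.range_eq_top]
    have e2 : (↥M ⧸ T) ≃ₗ[𝓞 K] LinearMap.range φ := hkerφ ▸ φ.quotKerEquivRange
    have hcardrange : Nat.card (LinearMap.range φ) = n ^ (k * d) := by
      rw [← Nat.card_congr e2.toEquiv, hcardMq]
    have hset : (LinearMap.range φ : Set (↥L ⧸ Ln')) = Set.univ := by
      apply Set.eq_of_subset_of_ncard_le (Set.subset_univ _) _ Set.finite_univ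
      rw [Set.ncard_univ, ← Nat.card_coe_set_eq]
      show Nat.card (↥L ⧸ Ln') ≤ Nat.card (LinearMap.range φ)
      rw [hcardrange, hcardLq]
    apply SetLike.ext'
    rw [hset]
    rfl
  have hLdecomp : ∀ l ∈ L, ∃ m, m ∈ M ∧ l - m ∈ Ln := by
    intro l hl
    obtain ⟨m, hm⟩ := hsurj (Submodule.Quotient.mk ⟨l, hl⟩)
    refine ⟨(m : V), m.2, ?_⟩
    have h1 : (Submodule.inclusion hML m : ↥L) - ⟨l, hl⟩ ∈ Ln' :=
      (Submodule.Quotient.eq _).mp hm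
    have h2 : ((m : V) - l) ∈ Ln := h1
    have h3 := Ln.neg_mem h2
    rwa [neg_sub] at h3
  -- PART 2
  refine ⟨part1, ?_⟩
  intro i hik1 hir
  set s : ℝ := Real.sqrt ((k * d : ℕ) : ℝ) with hs
  have hs0 : (0 : ℝ) ≤ s := Real.sqrt_nonneg _
  set C : ℝ := 1 + Γ * s / 2 with hC
  have hΓ0 : (0 : ℝ) ≤ Γ := le_trans zero_le_one hΓ1
  have hC1 : (1 : ℝ) ≤ C := le_add_of_nonneg_right (by positivity)
  have hC0 : (0 : ℝ) < C := lt_of_lt_of_le one_pos hC1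
  have hneLi := hneL i hir
  have hneLni := hneLn i hir
  have hlamk1_le_i : succMin K (L : Set V) (k + 1) ≤ succMin K (L : Set V) i :=
    succMin_mono_index hik1 hneLi
  constructor
  · exact succMin_anti_set (fun x hx => hLnL hx) hneLni
  -- upper bound
  have hCl : ∀ lam ∈ msSet K (L : Set V) i, succMin K (Ln : Set V) i ≤ C * lam := by
    rintro lam hlammem
    obtain ⟨hlam0, v, hvL, hvind, hvnorm⟩ := hlammem
    have hlami_le : succMin K (L : Set V) i ≤ lam := succMin_le_of_mem ⟨hlam0, v, hvL, hvind, hvnorm⟩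
    have hlamk1_le_lam : succMin K (L : Set V) (k + 1) ≤ lam := le_trans hlamk1_le_i hlami_le
    have hnlamk_le_lam : (n : ℝ) * succMin K (L : Set V) k ≤ lam := le_trans hgap hlamk1_le_lam
    -- the scaled short family
    set Y : Fin k → V := fun j => (n : 𝓞 K) • y j with hY
    have hYmem_nMV : ∀ j, Y j ∈ nMV := fun j => (hmem_nMV _).mpr ⟨y j, hyM j, rfl⟩
    have hYLn : ∀ j, Y j ∈ Ln := fun j => hnMV_le_Ln (hYmem_nMV j)
    have hYL : ∀ j, Y j ∈ L := fun j => hLnL (hYLn j)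
    have hYWK : ∀ j, Y j ∈ WK := fun j => hMW _ (hnMV_le_M (hYmem_nMV j))
    have hYnorm : ∀ j, ‖Y j‖ ≤ lam := by
      intro j
      rw [hY]
      show ‖(n : 𝓞 K) • y j‖ ≤ lam
      rw [hnorm_smul]
      calc (n : ℝ) * ‖y j‖ ≤ (n : ℝ) * succMin K (L : Set V) k :=
            mul_le_mul_of_nonneg_left (hynorm j) (le_of_lt hn0)
        _ ≤ lam := hnlamk_le_lam
    have hYind : LinearIndependent K Y := hsmul_indep y hyindep
    have hY0 : ∀ j, Y j ≠ 0 := fun j => hYind.ne_zero j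
    -- ε-approximation
    have hstep : ∀ ε : ℝ, 0 < ε → succMin K (Ln : Set V) i ≤ C * lam + ε := by
      intro ε hε
      set δ := ε / (s + 1) with hδdef
      have hδ0 : (0 : ℝ) < δ := by positivity
      have hδeq : δ * (s + 1) = ε := by rw [hδdef]; field_simp
      -- ℚ-independent short families inside each span {Y j}
      have hwex : ∀ j : Fin k, ∃ w : Fin d → V,
          (∀ a, w a ∈ Submodule.span (𝓞 K) {Y j}) ∧ LinearIndependent ℚ w ∧
          ∀ a, ‖w a‖ ≤ Γ * lam + δ := by
        intro j
        set e0 := (Fintype.equivFinOfCardEq hcard_ιK).symm with he0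
        set g : Fin d → V :=
          fun a => ((NumberField.RingOfIntegers.basis K) (e0 a) : 𝓞 K) • Y j with hg
        have hgmem : ∀ a, g a ∈ Submodule.span (𝓞 K) {Y j} :=
          fun a => Submodule.smul_mem _ _ (Submodule.mem_span_singleton_self _)
        have hgind : LinearIndependent ℚ g := by
          have hsing : LinearIndependent K (fun _ : Fin 1 => Y j) :=
            LinearIndependent.of_subsingleton 0 (hY0 j)
          have h0 := linearIndependent_smul (NumberField.integralBasis K).linearIndependent hsing
          set eq1 : Fin d ≃ (Module.Free.ChooseBasisIndex ℤ (𝓞 K)) × Fin 1 :=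
            e0.trans (Equiv.prodUnique _ (Fin 1)).symm with heq1
          have h1 := h0.comp eq1 eq1.injective
          have heqf : g = (fun p : (Module.Free.ChooseBasisIndex ℤ (𝓞 K)) × Fin 1 =>
              (NumberField.integralBasis K p.1 : K) • Y j) ∘ eq1 := by
            funext a
            simp only [Function.comp_apply, hg]
            rw [NumberField.integralBasis_apply, algebraMap_smul]
            simp [heq1]
          rw [heqf]
          exact h1
        obtain ⟨B1, hB1⟩ := Finset.exists_le (Finset.univ.image fun a : Fin d => ‖g a‖)
        have hne_d : (msSet ℚ ((Submodule.span (𝓞 K) {Y j} : Submodule (𝓞 K) V) : Set V) d).Nonempty :=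
          ⟨max B1 1, lt_of_lt_of_le zero_lt_one (le_max_right _ _), g, hgmem, hgind,
            fun a => le_trans (hB1 _ (Finset.mem_image_of_mem _ (Finset.mem_univ a)))
              (le_max_left _ _)⟩
        have h1mem : ‖Y j‖ ∈ msSet ℚ ((Submodule.span (𝓞 K) {Y j} : Submodule (𝓞 K) V) : Set V) 1 :=
          ⟨norm_pos_iff.mpr (hY0 j), fun _ => Y j,
            fun _ => Submodule.mem_span_singleton_self _,
            LinearIndependent.of_subsingleton 0 (hY0 j), fun _ => le_refl _⟩
        have hsm1 : succMin ℚ ((Submodule.span (𝓞 K) {Y j} : Submodule (𝓞 K) V) : Set V) 1 ≤ ‖Y j‖ :=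
          succMin_le_of_mem h1mem
        have hΓj := hΓ (Y j) (hYL j) (hY0 j)
        have hsmd : succMin ℚ ((Submodule.span (𝓞 K) {Y j} : Submodule (𝓞 K) V) : Set V) d ≤ Γ * lam :=
          calc succMin ℚ ((Submodule.span (𝓞 K) {Y j} : Submodule (𝓞 K) V) : Set V) d
              ≤ Γ * succMin ℚ ((Submodule.span (𝓞 K) {Y j} : Submodule (𝓞 K) V) : Set V) 1 := hΓj
            _ ≤ Γ * ‖Y j‖ := mul_le_mul_of_nonneg_left hsm1 hΓ0
            _ ≤ Γ * lam := mul_le_mul_of_nonneg_left (hYnorm j) hΓ0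
        obtain ⟨lam', hlam'mem, hlam'lt⟩ := exists_lt_of_csInf_lt hne_d
          (lt_add_of_pos_right
            (succMin ℚ ((Submodule.span (𝓞 K) {Y j} : Submodule (𝓞 K) V) : Set V) d) hδ0)
        obtain ⟨hlam'0, w, hww1, hww2, hww3⟩ := hlam'mem
        exact ⟨w, hww1, hww2, fun a => le_trans (hww3 a) (by linarith)⟩
      choose w hw1 hw2 hw3 using hwex
      set bnd := Γ * lam + δ with hbnd
      have hbnd0 : (0 : ℝ) < bnd := by nlinarith
      set ww : Fin k × Fin d → V := fun p => w p.1 p.2 with hww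
      have hwwnMV : ∀ p, ww p ∈ nMV := fun p =>
        (Submodule.span_singleton_le_iff_mem _ _).mpr (hYmem_nMV p.1) (hw1 p.1 p.2)
      have hwwWK : ∀ p, ww p ∈ WK := fun p => hMW _ (hnMV_le_M (hwwnMV p))
      have hwwnorm : ∀ p, ‖ww p‖ ≤ bnd := fun p => hw3 p.1 p.2
      have hwwind : LinearIndependent ℚ ww := by
        have hc : ∀ p : Fin k × Fin d, ∃ c : 𝓞 K, c • Y p.1 = w p.1 p.2 := fun p =>
          Submodule.mem_span_singleton.mp (hw1 p.1 p.2)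
        choose cf hcf using hc
        rw [Fintype.linearIndependent_iff]
        intro q hq
        have hsum : ∀ j : Fin k,
            (∑ a : Fin d, q (j, a) • ((cf (j, a) : K))) • Y j
              = ∑ a : Fin d, q (j, a) • w j a := by
          intro j
          rw [Finset.sum_smul]
          apply Finset.sum_congr rfl
          intro a _
          rw [smul_assoc]
          congr 1
          rw [← hcf (j, a), algebraMap_smul]
        have htotal : ∑ j : Fin k, (∑ a : Fin d, q (j, a) • ((cf (j, a) : K))) • Y j = 0 := by
          calc ∑ j : Fin k, (∑ a : Fin d, q (j, a) • ((cf (j, a) : K))) • Y j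
              = ∑ j : Fin k, ∑ a : Fin d, q (j, a) • w j a :=
                Finset.sum_congr rfl (fun j _ => hsum j)
            _ = ∑ p : Fin k × Fin d, q p • ww p := by rw [Fintype.sum_prod_type]
            _ = 0 := hq
        have hγ := Fintype.linearIndependent_iff.mp hYind _ htotal
        intro p
        obtain ⟨j, a⟩ := p
        have hzero : ∑ a : Fin d, q (j, a) • w j a = 0 := by
          rw [← hsum j, hγ j, zero_smul]
        exact Fintype.linearIndependent_iff.mp (hw2 j) _ hzero a
      haveI : Nonempty (Fin k × Fin d) := ⟨(⟨0, hk1⟩, ⟨0, hd1⟩)⟩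
      have hMspan : ∀ m ∈ M, m ∈ Submodule.span ℚ (Set.range ww) := by
        intro m hm
        set wwW : Fin k × Fin d → ↥WK := fun p => ⟨ww p, hwwWK p⟩ with hwwW
        have hwwWind : LinearIndependent ℚ wwW := by
          apply LinearIndependent.of_comp (WK.subtype.restrictScalars ℚ)
          exact hwwind
        have hspan_top : Submodule.span ℚ (Set.range wwW) = ⊤ :=
          hwwWind.span_eq_top_of_card_eq_finrank
            (by rw [Fintype.card_prod, Fintype.card_fin, Fintype.card_fin, hWKQrank, Nat.mul_comm])
        have hmapww : Submodule.map (WK.subtype.restrictScalars ℚ)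
            (Submodule.span ℚ (Set.range wwW)) = Submodule.span ℚ (Set.range ww) := by
          rw [Submodule.map_span]
          congr 1
          rw [← Set.range_comp]
          rfl
        rw [← hmapww, hspan_top]
        exact ⟨⟨m, hMW _ hm⟩, Submodule.mem_top, rfl⟩
      -- choose the complement indices
      set U := Submodule.span K (Set.range v) with hU
      haveI hUfd : FiniteDimensional K ↥U := FiniteDimensional.span_of_finite K (Set.finite_range v)
      have hUrank : Module.finrank K ↥U = i := by
        rw [hU, finrank_span_eq_card hvind, Fintype.card_fin]
      set f := (WK.mkQ).comp U.subtype with hf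
      have hkerWK : ∀ x : ↥U, x ∈ LinearMap.ker f → ((x : V) ∈ WK) := by
        intro x hx
        rw [LinearMap.mem_ker, hf, LinearMap.comp_apply, Submodule.mkQ_apply,
          Submodule.Quotient.mk_eq_zero] at hx
        exact hx
      have hkerf_rank : Module.finrank K ↥(LinearMap.ker f) ≤ k := by
        set ψ := LinearMap.codRestrict WK ((U.subtype).comp (LinearMap.ker f).subtype)
          (fun c => hkerWK _ c.2) with hψ
        have hinj : Function.Injective ψ := by
          intro a b hab
          have h1 : (ψ a : V) = (ψ b : V) := congrArg Subtype.val hab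
          simp only [hψ, LinearMap.codRestrict_apply, LinearMap.comp_apply,
            Submodule.coe_subtype] at h1
          exact Subtype.ext (Subtype.ext h1)
        calc Module.finrank K ↥(LinearMap.ker f) ≤ Module.finrank K ↥WK :=
              LinearMap.finrank_le_finrank_of_injective hinj
          _ = k := hWKrank
      have hrange_eq : LinearMap.range f = Submodule.map WK.mkQ U := by
        rw [hf, LinearMap.range_comp, Submodule.range_subtype]
      have hspanR : Submodule.span K (Set.range (⇑WK.mkQ ∘ v)) = Submodule.map WK.mkQ U := by
        rw [Set.range_comp, hU, Submodule.map_span]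
      have hfinrank_ge : i - k ≤ Module.finrank K ↥(Submodule.span K (Set.range (⇑WK.mkQ ∘ v))) := by
        have h1 := LinearMap.finrank_range_add_finrank_ker f
        rw [hUrank] at h1
        rw [hspanR, ← hrange_eq]
        omega
      obtain ⟨bv, hbvR, hbvspan, hbvind⟩ := exists_linearIndependent K (Set.range (⇑WK.mkQ ∘ v))
      have hbvfin : bv.Finite := (Set.finite_range _).subset hbvR
      haveI := hbvfin.fintype
      have hbvcard : bv.toFinset.card
          = Module.finrank K ↥(Submodule.span K (Set.range (⇑WK.mkQ ∘ v))) := by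
        rw [← hbvspan, finrank_span_set_eq_card hbvind]
      obtain ⟨t, htbv, htcard⟩ := Finset.exists_subset_card_eq (s := bv.toFinset) (n := i - k)
        (by rw [hbvcard]; exact hfinrank_ge)
      have htsubbv : (↑t : Set (V ⧸ WK)) ⊆ bv := by
        intro x hx
        rw [← Set.coe_toFinset bv]
        exact_mod_cast htbv hx
      have htind : LinearIndependent K (Subtype.val : (↑t : Set (V ⧸ WK)) → V ⧸ WK) :=
        LinearIndepOn.mono (v := id) hbvind htsubbv
      have hmemR : ∀ x : (↑t : Set (V ⧸ WK)), ∃ jx : Fin i, WK.mkQ (v jx) = (x : V ⧸ WK) := by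
        intro x
        obtain ⟨jx, hjx⟩ := hbvR (htsubbv x.2)
        exact ⟨jx, hjx⟩
      choose gg hgg using hmemR
      choose mfun hmM hmLn using fun x : (↑t : Set (V ⧸ WK)) => hLdecomp (v (gg x)) (hvL (gg x))
      -- Babai rounding into nMV
      set wwFin : Fin (k * d) → V := ww ∘ (finProdFinEquiv (m := k) (n := d)).symm with hwwFin
      have hrange_wwFin : Set.range wwFin = Set.range ww := by
        rw [hwwFin, Set.range_comp, Equiv.range_eq_univ, Set.image_univ]
      have hbabai : ∀ x : (↑t : Set (V ⧸ WK)), ∃ p, p ∈ nMV ∧ ‖mfun x - p‖ ≤ s * bnd / 2 := by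
        intro x
        have hmem : mfun x ∈ Submodule.span ℝ (Set.range wwFin) := by
          rw [hrange_wwFin]
          exact mem_span_real_of_mem_span_rat (hMspan _ (hmM x))
        obtain ⟨z, hz⟩ := babai (k * d) wwFin (mfun x) hmem
        refine ⟨∑ a, (z a : ℝ) • wwFin a, ?_, ?_⟩
        · apply Submodule.sum_mem
          intro a _
          rw [Int.cast_smul_eq_zsmul ℝ]
          exact zsmul_mem (by rw [hwwFin]; exact hwwnMV _) _
        · have hwwFinnorm : ∀ a, ‖wwFin a‖ ≤ bnd := by
            intro a
            rw [hwwFin]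
            exact hwwnorm _
          have hsumsq : (∑ a : Fin (k * d), ‖wwFin a‖ ^ 2) ≤ ((k * d : ℕ) : ℝ) * bnd ^ 2 := by
            calc ∑ a : Fin (k * d), ‖wwFin a‖ ^ 2
                ≤ ∑ _a : Fin (k * d), bnd ^ 2 :=
                  Finset.sum_le_sum (fun a _ =>
                    pow_le_pow_left₀ (norm_nonneg _) (hwwFinnorm a) 2)
              _ = ((k * d : ℕ) : ℝ) * bnd ^ 2 := by
                  rw [Finset.sum_const, Finset.card_univ, Fintype.card_fin, nsmul_eq_mul]
          have hsq : (s * bnd / 2) ^ 2 = ((k * d : ℕ) : ℝ) * bnd ^ 2 / 4 := by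
            rw [hs, div_pow, mul_pow,
              Real.sq_sqrt (by positivity : (0 : ℝ) ≤ ((k * d : ℕ) : ℝ))]
            norm_num
          have h2 : ‖mfun x - ∑ a, (z a : ℝ) • wwFin a‖ ^ 2 ≤ (s * bnd / 2) ^ 2 := by
            rw [hsq]
            calc ‖mfun x - ∑ a, (z a : ℝ) • wwFin a‖ ^ 2
                ≤ (∑ a : Fin (k * d), ‖wwFin a‖ ^ 2) / 4 := hz
              _ ≤ ((k * d : ℕ) : ℝ) * bnd ^ 2 / 4 :=
                  (div_le_div_iff_of_pos_right (by norm_num)).mpr hsumsq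
          calc ‖mfun x - ∑ a, (z a : ℝ) • wwFin a‖
              = Real.sqrt (‖mfun x - ∑ a, (z a : ℝ) • wwFin a‖ ^ 2) :=
                (Real.sqrt_sq (norm_nonneg _)).symm
            _ ≤ Real.sqrt ((s * bnd / 2) ^ 2) := Real.sqrt_le_sqrt h2
            _ = s * bnd / 2 := Real.sqrt_sq (by positivity)
      choose pf hpf1 hpf2 using hbabai
      -- the corrected family
      set u : (↑t : Set (V ⧸ WK)) → V := fun x => (v (gg x) - mfun x) + pf x with hu
      have huLn : ∀ x, u x ∈ Ln := fun x => Submodule.add_mem _ (hmLn x) (hnMV_le_Ln (hpf1 x))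
      have hubound : ∀ x, ‖u x‖ ≤ lam + s * bnd / 2 := by
        intro x
        have h1 : u x = v (gg x) - (mfun x - pf x) := by
          simp only [hu]
          abel
        rw [h1]
        calc ‖v (gg x) - (mfun x - pf x)‖ ≤ ‖v (gg x)‖ + ‖mfun x - pf x‖ := norm_sub_le _ _
          _ ≤ lam + s * bnd / 2 := add_le_add (hvnorm _) (hpf2 x)
      have hπqu : ∀ x, WK.mkQ (u x) = (x : V ⧸ WK) := by
        intro x
        have hdiff : u x - v (gg x) ∈ WK := by
          have h1 : u x - v (gg x) = pf x - mfun x := by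
            simp only [hu]
            abel
          rw [h1]
          exact Submodule.sub_mem _ (hMW _ (hnMV_le_M (hpf1 x))) (hMW _ (hmM x))
        have h2 := (Submodule.Quotient.eq WK).mpr hdiff
        rw [Submodule.mkQ_apply, h2, ← Submodule.mkQ_apply, hgg x]
      have huind : LinearIndependent K u := by
        apply LinearIndependent.of_comp WK.mkQ
        have h1 : ⇑WK.mkQ ∘ u = (Subtype.val : (↑t : Set (V ⧸ WK)) → V ⧸ WK) :=
          funext fun x => hπqu x
        rw [h1]
        exact htind
      have hdisj : Disjoint (Submodule.span K (Set.range Y))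
          (Submodule.span K (Set.range u)) := by
        have hYle : Submodule.span K (Set.range Y) ≤ WK :=
          span_le.mpr (by rintro _ ⟨j, rfl⟩; exact hYWK j)
        apply Disjoint.mono_left hYle
        rw [disjoint_iff]
        apply le_bot_iff.mp
        intro x hx
        rw [Submodule.mem_inf] at hx
        obtain ⟨hx1, hx2⟩ := hx
        obtain ⟨cx, hcx⟩ := (mem_span_range_iff_exists_fun K).mp hx2
        have h0 : WK.mkQ x = 0 := by
          rw [Submodule.mkQ_apply, Submodule.Quotient.mk_eq_zero]
          exact hx1
        have hsum0 : ∑ xx, cx xx • (Subtype.val xx : V ⧸ WK) = 0 := by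
          calc ∑ xx, cx xx • (Subtype.val xx : V ⧸ WK)
              = ∑ xx, cx xx • WK.mkQ (u xx) := by
                apply Finset.sum_congr rfl
                intro xx _
                rw [hπqu xx]
            _ = WK.mkQ (∑ xx, cx xx • u xx) := by
                rw [map_sum]
                apply Finset.sum_congr rfl
                intro xx _
                rw [map_smul]
            _ = WK.mkQ x := by rw [hcx]
            _ = 0 := h0
        have hc0 := Fintype.linearIndependent_iff.mp htind cx hsum0
        rw [Submodule.mem_bot, ← hcx]
        apply Finset.sum_eq_zero
        intro xx _
        rw [hc0 xx, zero_smul]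
      set G : Fin k ⊕ (↑t : Set (V ⧸ WK)) → V := Sum.elim Y u with hG
      have hGind : LinearIndependent K G := hYind.sum_type huind hdisj
      have hcardt : Fintype.card (↑t : Set (V ⧸ WK)) = i - k := by simpa using htcard
      have heqcard : Fintype.card (Fin k ⊕ (↑t : Set (V ⧸ WK))) = i := by
        rw [Fintype.card_sum, Fintype.card_fin, hcardt]
        omega
      have eG : Fin i ≃ (Fin k ⊕ (↑t : Set (V ⧸ WK))) := (Fintype.equivFinOfCardEq heqcard).symm
      have hkey : lam + s * bnd / 2 ≤ C * lam + ε := by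
        have h1 : s * δ / 2 ≤ ε := by
          linarith only [hδeq, hδ0, hs0, mul_nonneg hs0 hδ0.le]
        rw [hC, hbnd]
        linarith only [h1]
      apply succMin_le_of_mem
      refine ⟨by positivity, G ∘ eG, ?_, hGind.comp eG eG.injective, ?_⟩
      · intro jj
        show G (eG jj) ∈ Ln
        rcases hj : eG jj with a | a
        · exact hYLn a
        · exact huLn a
      · intro jj
        show ‖G (eG jj)‖ ≤ C * lam + ε
        rcases hj : eG jj with a | a
        · have h1 : ‖G (Sum.inl a)‖ = ‖Y a‖ := rfl
          rw [h1]
          have h2 := hYnorm a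
          have h3 : lam ≤ C * lam := le_mul_of_one_le_left (le_of_lt hlam0) hC1
          linarith only [h2, h3, hε]
        · have h1 : ‖G (Sum.inr a)‖ = ‖u a‖ := rfl
          rw [h1]
          exact le_trans (hubound a) hkey
    have hfin2 : succMin K (Ln : Set V) i ≤ C * lam := le_of_forall_pos_le_add hstep
    exact hfin2
  have h2 : ∀ lam ∈ msSet K (L : Set V) i, succMin K (Ln : Set V) i / C ≤ lam := by
    intro lam hlam
    rw [div_le_iff₀ hC0]
    calc succMin K (Ln : Set V) i ≤ C * lam := hCl lam hlam
      _ = lam * C := mul_comm _ _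
  have h3 := le_succMin hneLi h2
  rw [div_le_iff₀ hC0] at h3
  calc succMin K (Ln : Set V) i ≤ succMin K (L : Set V) i * C := h3
    _ = C * succMin K (L : Set V) i := mul_comm _ _
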